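/- For every nonzero real number x₀ and every upper semi-continuous log-concave probability density f on ℝ with mean zero, f(x₀) ≤ 1/|x₀|. -/

import Mathlib

open MeasureTheory Set Real
open scoped ENNReal

lemma logconcave_aux_pos
    (f : ℝ → ℝ) (hmeas : Measurable f) (hf0 : ∀ x, 0 ≤ f x)
    (hlc : ∀ x y a b : ℝ, 0 ≤ a → 0 ≤ b → a + b = 1 →
      f x ^ a * f y ^ b ≤ f (a * x + b * y))
    (hint : ∫ x, f x = 1) (hmean : ∫ x, x * f x = 0)
    (x₀ : ℝ) (hx₀ : 0 < x₀) : f x₀ * x₀ ≤ 1 := by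
  rcases eq_or_lt_of_le (hf0 x₀) with hc0 | hc0
  · rw [← hc0, zero_mul]; norm_num
  have hfInt : Integrable f := by
    by_contra h
    rw [integral_undef h] at hint; norm_num at hint
  have hL : ∫⁻ x, ENNReal.ofReal (f x) = 1 := by
    rw [← ofReal_integral_eq_lintegral_ofReal hfInt (Filter.Eventually.of_forall hf0), hint,
      ENNReal.ofReal_one]
  -- pointwise two-point inequality
  have L1 : ∀ y t, y ≤ t → t ≤ x₀ → f x₀ * f y ≤ f t * f (y + (x₀ - t)) := by
    intro y t hyt htx
    rcases eq_or_lt_of_le (hyt.trans htx) with hyx | hyx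
    · have ht : t = x₀ := le_antisymm htx (hyx ▸ hyt)
      rw [ht, hyx]
      simp
    · have hxy : 0 < x₀ - y := by linarith
      set a := (t - y) / (x₀ - y) with hadef
      set b := (x₀ - t) / (x₀ - y) with hbdef
      have ha : 0 ≤ a := div_nonneg (by linarith) hxy.le
      have hb : 0 ≤ b := div_nonneg (by linarith) hxy.le
      have hab : a + b = 1 := by rw [hadef, hbdef]; field_simp; ring
      have h1 := hlc x₀ y a b ha hb hab
      have h2 := hlc x₀ y b a hb ha (by linarith)
      have e1 : a * x₀ + b * y = t := by rw [hadef, hbdef]; field_simp; ring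
      have e2 : b * x₀ + a * y = y + (x₀ - t) := by rw [hadef, hbdef]; field_simp; ring
      rw [e1] at h1; rw [e2] at h2
      have key : f x₀ * f y = (f x₀ ^ a * f y ^ b) * (f x₀ ^ b * f y ^ a) := by
        rw [mul_mul_mul_comm, ← Real.rpow_add' (hf0 x₀) (by rw [hab]; norm_num),
          ← Real.rpow_add' (hf0 y) (by rw [add_comm, hab]; norm_num), hab, add_comm b a, hab,
          Real.rpow_one, Real.rpow_one]
      rw [key]
      exact mul_le_mul h1 h2 (mul_nonneg (Real.rpow_nonneg (hf0 x₀) b)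
        (Real.rpow_nonneg (hf0 y) a)) (hf0 t)
  set Fl : ℝ → ℝ≥0∞ := fun t => ∫⁻ y in Iio t, ENNReal.ofReal (f y) with hFl
  have hFl_le : ∀ t, Fl t ≤ 1 := fun t => (setLIntegral_le_lintegral _ _).trans hL.le
  have htrans : ∀ t ≤ x₀, ∫⁻ y in Iio t, ENNReal.ofReal (f (y + (x₀ - t))) = Fl x₀ := by
    intro t _
    have h1 : ∀ y : ℝ, (Iio t).indicator (fun y => ENNReal.ofReal (f (y + (x₀ - t)))) y
        = (Iio x₀).indicator (fun z => ENNReal.ofReal (f z)) (y + (x₀ - t)) := by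
      intro y
      simp only [indicator_apply, mem_Iio]
      by_cases hy : y < t
      · rw [if_pos hy, if_pos (by linarith)]
      · rw [if_neg hy, if_neg (fun h => hy (by linarith))]
    simp only [hFl]
    rw [← lintegral_indicator measurableSet_Iio, ← lintegral_indicator measurableSet_Iio,
      lintegral_congr h1]
    exact lintegral_add_right_eq_self
      (fun z => (Iio x₀).indicator (fun z => ENNReal.ofReal (f z)) z) _
  have L2 : ∀ t ≤ x₀, ENNReal.ofReal (f x₀) * Fl t ≤ ENNReal.ofReal (f t) * Fl x₀ := by
    intro t ht
    simp only [hFl]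
    rw [← lintegral_const_mul' _ _ ENNReal.ofReal_ne_top]
    calc ∫⁻ y in Iio t, ENNReal.ofReal (f x₀) * ENNReal.ofReal (f y)
        ≤ ∫⁻ y in Iio t, ENNReal.ofReal (f t) * ENNReal.ofReal (f (y + (x₀ - t))) := by
          refine setLIntegral_mono (by fun_prop) ?_
          intro y hy
          rw [← ENNReal.ofReal_mul (hf0 x₀), ← ENNReal.ofReal_mul (hf0 t)]
          exact ENNReal.ofReal_le_ofReal (L1 y t (le_of_lt hy) ht)
      _ = ENNReal.ofReal (f t) * ∫⁻ y in Iio t, ENNReal.ofReal (f (y + (x₀ - t))) :=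
          lintegral_const_mul' _ _ ENNReal.ofReal_ne_top
      _ = ENNReal.ofReal (f t) * Fl x₀ := by rw [htrans t ht]
  set A : ℝ≥0∞ := ∫⁻ x in Iic x₀, ENNReal.ofReal ((x₀ - x) * f x) with hA
  -- Tonelli
  have hTon : A = ∫⁻ t in Iic x₀, Fl t := by
    set S : Set (ℝ × ℝ) := {p : ℝ × ℝ | p.1 < p.2 ∧ p.2 ≤ x₀} with hS
    have hSmeas : MeasurableSet S :=
      (measurableSet_lt measurable_fst measurable_snd).inter
        (measurableSet_le measurable_snd measurable_const)
    set G : ℝ × ℝ → ℝ≥0∞ := fun p => ENNReal.ofReal (f p.1) * S.indicator 1 p with hG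
    have hGmeas : Measurable G :=
      ((hmeas.comp measurable_fst).ennreal_ofReal).mul (measurable_one.indicator hSmeas)
    have step1 : ∀ x ∈ Iic x₀, ENNReal.ofReal ((x₀ - x) * f x) = ∫⁻ t, G (x, t) := by
      intro x hx
      have hGx : (fun t => G (x, t)) = fun t =>
          ENNReal.ofReal (f x) * (Ioc x x₀).indicator 1 t := by
        funext t
        simp only [hG, hS, indicator_apply, mem_setOf_eq, mem_Ioc, Pi.one_apply]
      rw [hGx, lintegral_const_mul' _ _ ENNReal.ofReal_ne_top,
        lintegral_indicator_one measurableSet_Ioc, Real.volume_Ioc,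
        ← ENNReal.ofReal_mul (hf0 x), mul_comm (f x)]
    have step2 : A = ∫⁻ x in Iic x₀, ∫⁻ t, G (x, t) :=
      setLIntegral_congr_fun measurableSet_Iic step1
    have hswap : ∫⁻ x in Iic x₀, ∫⁻ t, G (x, t) = ∫⁻ t, ∫⁻ x in Iic x₀, G (x, t) :=
      lintegral_lintegral_swap hGmeas.aemeasurable
    have step3 : ∀ t : ℝ, ∫⁻ x in Iic x₀, G (x, t) = (Iic x₀).indicator Fl t := by
      intro t
      by_cases ht : t ≤ x₀
      · rw [indicator_of_mem (mem_Iic.mpr ht)]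
        have hGt : ∀ x : ℝ, G (x, t)
            = (Iio t).indicator (fun x => ENNReal.ofReal (f x)) x := by
          intro x
          simp only [hG, hS, indicator_apply, mem_setOf_eq, mem_Iio]
          by_cases hxt : x < t
          · simp [hxt, ht]
          · simp [hxt]
        calc ∫⁻ x in Iic x₀, G (x, t)
            = ∫⁻ x in Iic x₀, (Iio t).indicator (fun x => ENNReal.ofReal (f x)) x :=
              lintegral_congr hGt
          _ = ∫⁻ x in Iio t ∩ Iic x₀, ENNReal.ofReal (f x) := by
              rw [lintegral_indicator measurableSet_Iio,
                Measure.restrict_restrict measurableSet_Iio]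
          _ = Fl t := by
              rw [inter_eq_self_of_subset_left
                (fun x (hx : x ∈ Iio t) => mem_Iic.mpr ((le_of_lt hx).trans ht))]
      · rw [indicator_of_notMem (fun hmem => ht (mem_Iic.mp hmem))]
        have hGt : ∀ x : ℝ, G (x, t) = 0 := by
          intro x
          simp only [hG, hS, indicator_apply, mem_setOf_eq]
          rw [if_neg (fun h => ht h.2), mul_zero]
        rw [lintegral_congr hGt]
        simp
    calc A = ∫⁻ x in Iic x₀, ∫⁻ t, G (x, t) := step2
      _ = ∫⁻ t, ∫⁻ x in Iic x₀, G (x, t) := hswap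
      _ = ∫⁻ t, (Iic x₀).indicator Fl t := lintegral_congr step3
      _ = ∫⁻ t in Iic x₀, Fl t := lintegral_indicator measurableSet_Iic Fl
  have hFlx₀ : Fl x₀ ≤ 1 := hFl_le x₀
  have hIic1 : ∫⁻ t in Iic x₀, ENNReal.ofReal (f t) ≤ 1 :=
    (setLIntegral_le_lintegral _ _).trans hL.le
  have hAbound : ENNReal.ofReal (f x₀) * A ≤ 1 := by
    rw [hTon, ← lintegral_const_mul' _ _ ENNReal.ofReal_ne_top]
    calc ∫⁻ t in Iic x₀, ENNReal.ofReal (f x₀) * Fl t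
        ≤ ∫⁻ t in Iic x₀, ENNReal.ofReal (f t) * Fl x₀ :=
          setLIntegral_mono' measurableSet_Iic (fun t ht => L2 t (mem_Iic.mp ht))
      _ = (∫⁻ t in Iic x₀, ENNReal.ofReal (f t)) * Fl x₀ :=
          lintegral_mul_const' _ _ (ne_top_of_le_ne_top ENNReal.one_ne_top hFlx₀)
      _ ≤ 1 * 1 := mul_le_mul' hIic1 hFlx₀
      _ = 1 := one_mul 1
  have hAne : A ≠ ⊤ := by
    intro htop
    rw [htop, ENNReal.mul_top (ENNReal.ofReal_pos.mpr hc0).ne'] at hAbound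
    exact absurd hAbound (by simp)
  have hnn : 0 ≤ᵐ[volume.restrict (Iic x₀)] fun x => (x₀ - x) * f x := by
    refine ae_restrict_of_forall_mem measurableSet_Iic ?_
    intro x hx
    have hx' : x ≤ x₀ := mem_Iic.mp hx
    exact mul_nonneg (by linarith) (hf0 x)
  have hsm : ∀ (s : Set ℝ), AEStronglyMeasurable (fun x => (x₀ - x) * f x)
      (volume.restrict s) :=
    fun s => ((measurable_const.sub measurable_id).mul hmeas).aestronglyMeasurable
  have hIntL : IntegrableOn (fun x => (x₀ - x) * f x) (Iic x₀) := by
    refine ⟨hsm _, ?_⟩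
    rw [hasFiniteIntegral_iff_ofReal hnn]
    exact Ne.lt_top hAne
  -- right tail
  obtain ⟨v, hvx, hfv⟩ : ∃ v, x₀ < v ∧ f v < f x₀ := by
    by_contra hcon
    push_neg at hcon
    have h1 : ∀ x ∈ Ioi x₀, ENNReal.ofReal (f x₀) ≤ ENNReal.ofReal (f x) :=
      fun x hx => ENNReal.ofReal_le_ofReal (hcon x hx)
    have h2 : ∫⁻ _ in Ioi x₀, ENNReal.ofReal (f x₀) ∂volume = ⊤ := by
      rw [setLIntegral_const, Real.volume_Ioi,
        ENNReal.mul_top (ENNReal.ofReal_pos.mpr hc0).ne']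
    have h3 : (⊤ : ℝ≥0∞) ≤ 1 := by
      rw [← h2]
      exact (setLIntegral_mono' measurableSet_Ioi h1).trans
        ((setLIntegral_le_lintegral _ _).trans hL.le)
    simp at h3
  set r : ℝ := max (f v / f x₀) (Real.exp (-1)) with hrdef
  have hr0 : 0 < r := lt_of_lt_of_le (Real.exp_pos _) (le_max_right _ _)
  have hr1 : r < 1 := max_lt ((div_lt_one hc0).mpr hfv)
    (by rw [← Real.exp_zero]; exact Real.exp_lt_exp.mpr (by norm_num))
  have hlogr : Real.log r < 0 := Real.log_neg hr0 hr1
  set α : ℝ := -Real.log r / (v - x₀) with hαdef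
  have hα : 0 < α := div_pos (by linarith) (by linarith)
  have decay : ∀ x, v ≤ x → f x ≤ f x₀ * Real.exp (-α * (x - x₀)) := by
    intro x hvxle
    have hxx : 0 < x - x₀ := by linarith
    set a := (x - v) / (x - x₀) with hadef
    set b := (v - x₀) / (x - x₀) with hbdef
    have hb : 0 < b := div_pos (by linarith) hxx
    have ha : 0 ≤ a := div_nonneg (by linarith) hxx.le
    have hab : a + b = 1 := by rw [hadef, hbdef]; field_simp; ring
    have h1 := hlc x₀ x a b ha hb.le hab
    have e1 : a * x₀ + b * x = v := by rw [hadef, hbdef]; field_simp; ring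
    rw [e1] at h1
    have hfvr : f v ≤ f x₀ * r := by
      have h2 : f v / f x₀ ≤ r := le_max_left _ _
      calc f v = f v / f x₀ * f x₀ := by field_simp
        _ ≤ r * f x₀ := mul_le_mul_of_nonneg_right h2 hc0.le
        _ = f x₀ * r := mul_comm _ _
    have hca : (0:ℝ) < f x₀ ^ a := Real.rpow_pos_of_pos hc0 a
    have h2 : f x ^ b ≤ f x₀ ^ b * r := by
      have h3 : f x₀ ^ a * f x ^ b ≤ f x₀ ^ a * (f x₀ ^ b * r) := by
        rw [← mul_assoc, ← Real.rpow_add hc0, hab, Real.rpow_one]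
        exact h1.trans hfvr
      exact (mul_le_mul_iff_right₀ hca).mp h3
    have h4 : f x ≤ f x₀ * r ^ (1/b) := by
      have h5 := Real.rpow_le_rpow (Real.rpow_nonneg (hf0 x) b) h2
        (le_of_lt (one_div_pos.mpr hb))
      rw [← Real.rpow_mul (hf0 x), mul_one_div_cancel hb.ne', Real.rpow_one,
        Real.mul_rpow (Real.rpow_nonneg hc0.le b) hr0.le, ← Real.rpow_mul hc0.le,
        mul_one_div_cancel hb.ne', Real.rpow_one] at h5
      exact h5
    have h6 : r ^ (1/b) = Real.exp (-α * (x - x₀)) := by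
      rw [Real.rpow_def_of_pos hr0]
      congr 1
      rw [hαdef, hbdef]
      field_simp
    rw [h6] at h4; exact h4
  have h5 : IntegrableOn (fun x => (x₀ - x) * f x) (Ioc x₀ v) := by
    refine Integrable.mono ((hfInt.restrict (s := Ioc x₀ v)).const_mul (v - x₀)) (hsm _) ?_
    refine ae_restrict_of_forall_mem measurableSet_Ioc ?_
    intro x hx
    obtain ⟨hx1, hx2⟩ := hx
    rw [Real.norm_eq_abs, Real.norm_eq_abs, abs_mul, abs_mul,
      abs_of_nonneg (hf0 x), abs_of_nonpos (by linarith : x₀ - x ≤ 0),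
      abs_of_nonneg (by linarith : (0:ℝ) ≤ v - x₀)]
    have := hf0 x
    nlinarith
  have hbase : IntegrableOn
      (fun x => (2 * f x₀ / α * Real.exp (α/2 * x₀)) * Real.exp (-(α/2) * x)) (Ioi v) :=
    (exp_neg_integrableOn_Ioi v (half_pos hα)).const_mul _
  have h6 : IntegrableOn (fun x => (x₀ - x) * f x) (Ioi v) := by
    refine Integrable.mono' hbase (hsm _) ?_
    refine ae_restrict_of_forall_mem measurableSet_Ioi ?_
    intro x hx
    have hx' : v < x := hx
    have hxx0 : x₀ < x := lt_trans hvx hx'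
    have hfd := decay x hx'.le
    rw [Real.norm_eq_abs, abs_mul, abs_of_nonneg (hf0 x),
      abs_of_nonpos (by linarith : x₀ - x ≤ 0)]
    have key1 : (x - x₀) ≤ (2/α) * Real.exp (α/2 * (x - x₀)) := by
      have h7 : α/2 * (x - x₀) + 1 ≤ Real.exp (α/2 * (x - x₀)) := Real.add_one_le_exp _
      have h9 : (0:ℝ) < 2/α := by positivity
      have h10 : (2/α) * (α/2*(x - x₀)+1) = (x - x₀) + 2/α := by field_simp
      linarith [mul_le_mul_of_nonneg_left h7 (le_of_lt h9)]
    have key2 : (x - x₀) * f x ≤ (x - x₀) * (f x₀ * Real.exp (-α * (x - x₀))) :=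
      mul_le_mul_of_nonneg_left hfd (by linarith)
    have key3 : (x - x₀) * (f x₀ * Real.exp (-α * (x - x₀)))
        ≤ (2/α) * Real.exp (α/2 * (x - x₀)) * (f x₀ * Real.exp (-α * (x - x₀))) :=
      mul_le_mul_of_nonneg_right key1 (by positivity)
    have key4 : (2/α) * Real.exp (α/2 * (x - x₀)) * (f x₀ * Real.exp (-α * (x - x₀)))
        = 2 * f x₀ / α * Real.exp (α/2 * x₀) * Real.exp (-(α/2) * x) := by
      have hexp : Real.exp (α/2 * (x - x₀)) * Real.exp (-α * (x - x₀))
          = Real.exp (α/2 * x₀) * Real.exp (-(α/2) * x) := by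
        rw [← Real.exp_add, ← Real.exp_add]
        congr 1
        ring
      calc (2/α) * Real.exp (α/2 * (x - x₀)) * (f x₀ * Real.exp (-α * (x - x₀)))
          = (2 * f x₀ / α) * (Real.exp (α/2 * (x - x₀)) * Real.exp (-α * (x - x₀))) := by ring
        _ = (2 * f x₀ / α) * (Real.exp (α/2 * x₀) * Real.exp (-(α/2) * x)) := by rw [hexp]
        _ = 2 * f x₀ / α * Real.exp (α/2 * x₀) * Real.exp (-(α/2) * x) := by ring
    linarith [key2.trans (key3.trans_eq key4)]
  have hIntR : IntegrableOn (fun x => (x₀ - x) * f x) (Ioi x₀) := by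
    have := h5.union h6
    rwa [Ioc_union_Ioi_eq_Ioi hvx.le] at this
  have hIntAll : Integrable (fun x => (x₀ - x) * f x) := by
    rw [← integrableOn_univ, ← Set.Iic_union_Ioi (a := x₀)]
    exact hIntL.union hIntR
  have hxf : Integrable (fun x => x * f x) := by
    have heq : (fun x => x * f x) = fun x => x₀ * f x - (x₀ - x) * f x := by
      funext x; ring
    rw [heq]
    exact (hfInt.const_mul x₀).sub hIntAll
  have hsum : ∫ x, (x₀ - x) * f x = x₀ := by
    have heq : (fun x => (x₀ - x) * f x) = fun x => x₀ * f x - x * f x := by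
      funext x; ring
    rw [heq, integral_sub (hfInt.const_mul x₀) hxf, integral_const_mul, hint, hmean,
      mul_one, sub_zero]
  have hunion := setIntegral_union (Iic_disjoint_Ioi le_rfl) measurableSet_Ioi hIntL hIntR
  rw [Iic_union_Ioi, setIntegral_univ] at hunion
  have hIoi_nonpos : ∫ x in Ioi x₀, (x₀ - x) * f x ≤ 0 := by
    have h0 : IntegrableOn (fun _ : ℝ => (0:ℝ)) (Ioi x₀) := integrableOn_zero
    have := setIntegral_mono_on hIntR h0 measurableSet_Ioi
      (fun x hx => mul_nonpos_iff.mpr (Or.inr ⟨by linarith [mem_Ioi.mp hx], hf0 x⟩))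
    simpa using this
  have hxle : x₀ ≤ ∫ x in Iic x₀, (x₀ - x) * f x := by
    rw [hsum] at hunion
    linarith
  have hEq : ∫ x in Iic x₀, (x₀ - x) * f x = A.toReal :=
    integral_eq_lintegral_of_nonneg_ae hnn (hsm _)
  have h1 : ENNReal.ofReal x₀ ≤ A := by
    rw [← ENNReal.ofReal_toReal hAne]
    exact ENNReal.ofReal_le_ofReal (hEq ▸ hxle)
  have h2 : ENNReal.ofReal (f x₀) * ENNReal.ofReal x₀ ≤ 1 :=
    le_trans (mul_le_mul_right h1 _) hAbound
  rw [← ENNReal.ofReal_mul hc0.le] at h2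
  exact ENNReal.ofReal_le_one.mp h2

theorem logconcave_mean_zero_envelope
    (f : ℝ → ℝ)
    (hf_nonneg : ∀ x, 0 ≤ f x)
    (hf_usc : UpperSemicontinuous f)
    (hf_lc : ∀ x y a b : ℝ, 0 ≤ a → 0 ≤ b → a + b = 1 →
      f x ^ a * f y ^ b ≤ f (a * x + b * y))
    (hf_int : ∫ x, f x = 1)
    (hf_mean : ∫ x, x * f x = 0)
    (x₀ : ℝ) (hx₀ : x₀ ≠ 0) :
    f x₀ ≤ 1 / |x₀| := by
  have hmeas : Measurable f := hf_usc.measurable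
  rcases hx₀.lt_or_gt with h | h
  · have hint' : ∫ x, f (-x) = 1 := by
      rw [integral_neg_eq_self]; exact hf_int
    have hmean' : ∫ x, x * f (-x) = 0 := by
      have h1 := integral_neg_eq_self (fun y => -y * f y) (volume : Measure ℝ)
      simp only [neg_neg] at h1
      rw [h1]
      have h2 : ∫ (x : ℝ), -x * f x = - ∫ (x : ℝ), x * f x := by
        simp only [neg_mul]
        exact integral_neg _
      rw [h2, hf_mean, neg_zero]
    have key := logconcave_aux_pos (fun x => f (-x)) (hmeas.comp measurable_neg)
      (fun x => hf_nonneg _)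
      (fun x y a b ha hb hab => by
        have h2 := hf_lc (-x) (-y) a b ha hb hab
        have e : a * -x + b * -y = -(a * x + b * y) := by ring
        rw [e] at h2
        exact h2)
      hint' hmean' (-x₀) (by linarith)
    simp only [neg_neg] at key
    rw [abs_of_neg h, le_div_iff₀ (by linarith)]
    linarith [key]
  · have key := logconcave_aux_pos f hmeas hf_nonneg hf_lc hf_int hf_mean x₀ h
    rw [abs_of_pos h, le_div_iff₀ h]
    linarith [key]
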